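/- If {x_i}_{i=1}^n ⊂ S¹ is a finite unit norm tight frame for ℝ² and f : ℝ → ℝ is a function such that y ↦ f(⟨x_i,y⟩) is measurable and ∫_{S¹} f(⟨x_i,y⟩) dσ(y) = 1 for each i, where σ is the uniform probability measure on the circle, then the probability measure μ with dμ(x) = (1/n)∑_{i=1}^n f(⟨x_i,x⟩) dσ(x) satisfies ∫_{S¹} |⟨y,x⟩|² dμ(x) = ‖y‖²/2 for all y ∈ ℝ², i.e., μ is a probabilistic unit norm tight frame for ℝ². -/

import Mathlib

open MeasureTheory RealInnerProductSpace

namespace Stmt5Aux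

noncomputable section

abbrev E2 := EuclideanSpace ℝ (Fin 2)

lemma norm_sq_eq (v : E2) : ‖v‖ ^ 2 = v 0 ^ 2 + v 1 ^ 2 := by
  rw [← real_inner_self_eq_norm_sq]
  simp only [PiLp.inner_apply, Fin.sum_univ_two, RCLike.inner_apply, conj_trivial]
  ring

lemma inner_eq (a b : E2) : ⟪a, b⟫ = a 0 * b 0 + a 1 * b 1 := by
  simp [PiLp.inner_apply, Fin.sum_univ_two, RCLike.inner_apply]
  ring

def perp (w : E2) : E2 := (WithLp.equiv 2 (Fin 2 → ℝ)).symm ![-(w 1), w 0]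

@[simp] lemma perp_zero (w : E2) : perp w 0 = -(w 1) := rfl
@[simp] lemma perp_one (w : E2) : perp w 1 = w 0 := rfl

lemma norm_perp {w : E2} (hw : ‖w‖ = 1) : ‖perp w‖ = 1 := by
  have h1 := norm_sq_eq w
  have h2 := norm_sq_eq (perp w)
  have h3 := norm_nonneg (perp w)
  rw [hw] at h1
  simp only [perp_zero, perp_one] at h2
  nlinarith

lemma inner_perp (w : E2) : ⟪w, perp w⟫ = 0 := by
  rw [inner_eq]; simp; ring

lemma inner_perp' (w : E2) : ⟪perp w, w⟫ = 0 := by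
  rw [real_inner_comm]; exact inner_perp w

lemma inner_self_one {w : E2} (hw : ‖w‖ = 1) : ⟪w, w⟫ = 1 := by
  rw [real_inner_self_eq_norm_sq, hw]; norm_num

lemma orthonormal_pair {w w' : E2} (hw : ‖w‖ = 1) (hw' : ‖w'‖ = 1)
    (hww' : ⟪w, w'⟫ = 0) : Orthonormal ℝ ![w, w'] := by
  rw [orthonormal_iff_ite]
  have hc : w 0 * w' 0 + w 1 * w' 1 = 0 := by rw [← inner_eq]; exact hww'
  intro i j
  fin_cases i <;> fin_cases j <;>
    first
      | (simp [inner_self_one hw, inner_self_one hw']; done)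
      | (simp [hw, hw', hww', real_inner_comm w w'])

lemma exists_isom {w w' : E2} (hw : ‖w‖ = 1) (hw' : ‖w'‖ = 1) (hww' : ⟪w, w'⟫ = 0) :
    ∃ T : E2 ≃ₗᵢ[ℝ] E2, ∀ a z : E2, ⟪a, T z⟫ = ⟪w, a⟫ * z 0 + ⟪w', a⟫ * z 1 := by
  have hon : Orthonormal ℝ ![w, w'] := orthonormal_pair hw hw' hww'
  have hsp : ⊤ ≤ Submodule.span ℝ (Set.range ![w, w']) := by
    refine le_of_eq ?_
    exact (hon.linearIndependent.span_eq_top_of_card_eq_finrank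
      (by simp [finrank_euclideanSpace_fin])).symm
  set B := OrthonormalBasis.mk hon hsp with hB
  refine ⟨B.repr.symm, fun a z => ?_⟩
  have h1 : ⟪a, B.repr.symm z⟫ = ⟪B.repr a, z⟫ := by
    conv_lhs => rw [← B.repr.symm_apply_apply a]
    exact B.repr.symm.inner_map_map (B.repr a) z
  rw [h1, inner_eq]
  rw [B.repr_apply_apply a 0, B.repr_apply_apply a 1]
  simp [hB, OrthonormalBasis.coe_mk]

end

end Stmt5Aux

open Stmt5Aux

/-- A FUNTF mixture of densities against the uniform measure on the circle is a
probabilistic unit norm tight frame for `ℝ²`. -/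
theorem stmt_5 {n : ℕ} (hn : 0 < n)
    (σ : Measure (EuclideanSpace ℝ (Fin 2))) [IsProbabilityMeasure σ]
    (hσsphere : σ (Metric.sphere (0 : EuclideanSpace ℝ (Fin 2)) 1) = 1)
    (hσinv : ∀ T : EuclideanSpace ℝ (Fin 2) ≃ₗᵢ[ℝ] EuclideanSpace ℝ (Fin 2),
      Measure.map T σ = σ)
    (x : Fin n → EuclideanSpace ℝ (Fin 2))
    (hxnorm : ∀ i, ‖x i‖ = 1)
    (hFUNTF : ∀ y : EuclideanSpace ℝ (Fin 2),
      ∑ i, ⟪x i, y⟫ ^ 2 = ((n : ℝ) / 2) * ‖y‖ ^ 2)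
    (f : ℝ → ℝ) (hf : ∀ t, 0 ≤ f t)
    (hmeas : ∀ i, Measurable fun y : EuclideanSpace ℝ (Fin 2) => f ⟪x i, y⟫)
    (hnorm : ∀ i, (∫ y, f ⟪x i, y⟫ ∂σ) = 1) :
    ∀ y : EuclideanSpace ℝ (Fin 2),
      (∫ z, ⟪y, z⟫ ^ 2
          ∂(σ.withDensity fun z => ENNReal.ofReal ((n : ℝ)⁻¹ * ∑ i, f ⟪x i, z⟫))) =
        ‖y‖ ^ 2 / 2 := by
  intro y
  classical
  set i₀ : Fin n := ⟨0, hn⟩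
  -- basic measurability facts
  have hz_meas : ∀ i : Fin 2, Measurable fun z : E2 => z i := fun i => by
    fun_prop
  -- a.e. points are on the sphere
  have hsphere_ae : ∀ᵐ z ∂σ, ‖z‖ = 1 := by
    have hcompl : σ (Metric.sphere (0 : E2) 1)ᶜ = 0 :=
      (prob_compl_eq_zero_iff Metric.isClosed_sphere.measurableSet).2 hσsphere
    have hmem : ∀ᵐ z ∂σ, z ∈ Metric.sphere (0 : E2) 1 := by
      rw [ae_iff]
      exact hcompl
    filter_upwards [hmem] with z hz
    simpa [Metric.mem_sphere, dist_zero_right] using hz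
  -- change of variables under isometries
  have change : ∀ (T : E2 ≃ₗᵢ[ℝ] E2) (g : E2 → ℝ), AEStronglyMeasurable g σ →
      ∫ z, g z ∂σ = ∫ z, g (T z) ∂σ := by
    intro T g hg
    conv_lhs => rw [← hσinv T]
    exact integral_map T.continuous.aemeasurable (by rwa [hσinv])
  -- adapted isometries
  have hTw : ∀ w : E2, ‖w‖ = 1 → ∃ T : E2 ≃ₗᵢ[ℝ] E2,
      (∀ a z : E2, ⟪a, T z⟫ = ⟪w, a⟫ * z 0 + ⟪perp w, a⟫ * z 1) ∧
      (∀ z : E2, ⟪w, T z⟫ = z 0) ∧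
      (∀ z : E2, ⟪w, z⟫ = T.symm z 0) ∧
      (∀ z : E2, ⟪perp w, z⟫ = T.symm z 1) := by
    intro w hw
    obtain ⟨T, hT⟩ := exists_isom hw (norm_perp hw) (inner_perp w)
    have hTz : ∀ z : E2, ⟪w, T z⟫ = z 0 := by
      intro z
      rw [hT, inner_self_one hw, inner_perp', one_mul, zero_mul, add_zero]
    have hTz' : ∀ z : E2, ⟪perp w, T z⟫ = z 1 := by
      intro z
      rw [hT, inner_perp, inner_self_one (norm_perp hw), one_mul, zero_mul, zero_add]
    refine ⟨T, hT, hTz, fun z => ?_, fun z => ?_⟩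
    · conv_lhs => rw [← T.apply_symm_apply z]
      exact hTz _
    · conv_lhs => rw [← T.apply_symm_apply z]
      exact hTz' _
  -- measurability for every unit vector
  have hmeas_w : ∀ w : E2, ‖w‖ = 1 → Measurable fun z : E2 => f ⟪w, z⟫ := by
    intro w hw
    obtain ⟨T, _, _, hT3, _⟩ := hTw w hw
    obtain ⟨S, _, hS2, _, _⟩ := hTw (x i₀) (hxnorm i₀)
    have heq : (fun z : E2 => f ⟪w, z⟫) = fun z => f ⟪x i₀, S (T.symm z)⟫ := by
      funext z; rw [hS2, ← hT3]
    rw [heq]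
    exact (hmeas i₀).comp ((S.continuous.comp T.symm.continuous).measurable)
  -- normalization for every unit vector
  have hint_w : ∀ w : E2, ‖w‖ = 1 → ∫ z, f ⟪w, z⟫ ∂σ = 1 := by
    intro w hw
    obtain ⟨T, _, hT2, _, _⟩ := hTw w hw
    obtain ⟨S, _, hS2, _, _⟩ := hTw (x i₀) (hxnorm i₀)
    calc ∫ z, f ⟪w, z⟫ ∂σ = ∫ z, f ⟪w, T z⟫ ∂σ :=
          change T _ ((hmeas_w w hw).aestronglyMeasurable)
      _ = ∫ z, f (z 0) ∂σ := by simp_rw [hT2]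
      _ = ∫ z, f ⟪x i₀, S z⟫ ∂σ := by simp_rw [hS2]
      _ = ∫ z, f ⟪x i₀, z⟫ ∂σ := (change S _ ((hmeas i₀).aestronglyMeasurable)).symm
      _ = 1 := hnorm i₀
  have hfint_w : ∀ w : E2, ‖w‖ = 1 → Integrable (fun z : E2 => f ⟪w, z⟫) σ := by
    intro w hw
    by_contra h
    have h1 := hint_w w hw
    rw [integral_undef h] at h1
    norm_num at h1
  -- the coordinate vectors
  set e0 : E2 := EuclideanSpace.single 0 1 with he0_def
  set e1 : E2 := EuclideanSpace.single 1 1 with he1_def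
  have he0 : ∀ z : E2, ⟪e0, z⟫ = z 0 := fun z => by
    simp [he0_def, EuclideanSpace.inner_single_left]
  have he1 : ∀ z : E2, ⟪e1, z⟫ = z 1 := fun z => by
    simp [he1_def, EuclideanSpace.inner_single_left]
  have he0n : ‖e0‖ = 1 := by simp [he0_def, EuclideanSpace.norm_single]
  have he1n : ‖e1‖ = 1 := by simp [he1_def, EuclideanSpace.norm_single]
  have hne1n : ‖(-e1 : E2)‖ = 1 := by rw [norm_neg]; exact he1n
  have hmeas0 : Measurable fun z : E2 => f (z 0) := by
    have := hmeas_w e0 he0n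
    simp_rw [he0] at this; exact this
  have hintf0 : Integrable (fun z : E2 => f (z 0)) σ := by
    have := hfint_w e0 he0n
    simp_rw [he0] at this; exact this
  have hnorm0 : ∫ z, f (z 0) ∂σ = 1 := by
    have := hint_w e0 he0n
    simp_rw [he0] at this; exact this
  -- integrability of bounded multiples
  have hmul_int : ∀ w : E2, ‖w‖ = 1 → ∀ (g : E2 → ℝ) (c : ℝ), Measurable g →
      (∀ z, ‖z‖ = 1 → |g z| ≤ c) → Integrable (fun z => g z * f ⟪w, z⟫) σ := by
    intro w hw g c hg hbd
    refine ((hfint_w w hw).const_mul c).mono'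
      ((hg.mul (hmeas_w w hw)).aestronglyMeasurable) ?_
    filter_upwards [hsphere_ae] with z hz
    have h1 : ‖g z * f ⟪w, z⟫‖ = |g z| * f ⟪w, z⟫ := by
      rw [norm_mul, Real.norm_eq_abs, Real.norm_eq_abs, abs_of_nonneg (hf _)]
    rw [h1]
    exact mul_le_mul_of_nonneg_right (hbd z hz) (hf _)
  have hmul_int0 : ∀ (g : E2 → ℝ) (c : ℝ), Measurable g →
      (∀ z, ‖z‖ = 1 → |g z| ≤ c) → Integrable (fun z => g z * f (z 0)) σ := by
    intro g c hg hbd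
    have := hmul_int e0 he0n g c hg hbd
    simp_rw [he0] at this; exact this
  have hcoord : ∀ (i : Fin 2) (z : E2), ‖z‖ = 1 → |z i| ≤ 1 := by
    intro i z hz
    have h := abs_real_inner_le_norm (EuclideanSpace.single i (1:ℝ)) z
    simpa [EuclideanSpace.inner_single_left, EuclideanSpace.norm_single, hz] using h
  set A : ℝ := ∫ z, z 0 ^ 2 * f (z 0) ∂σ with hA_def
  set B : ℝ := ∫ z, z 1 ^ 2 * f (z 0) ∂σ with hB_def
  have intA : Integrable (fun z : E2 => z 0 ^ 2 * f (z 0)) σ :=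
    hmul_int0 (fun z => z 0 ^ 2) 1 ((hz_meas 0).pow_const 2)
      (fun z hz => by
        show |z 0 ^ 2| ≤ 1
        rw [abs_pow]
        nlinarith [hcoord 0 z hz, abs_nonneg (z 0)])
  have intB : Integrable (fun z : E2 => z 1 ^ 2 * f (z 0)) σ :=
    hmul_int0 (fun z => z 1 ^ 2) 1 ((hz_meas 1).pow_const 2)
      (fun z hz => by
        show |z 1 ^ 2| ≤ 1
        rw [abs_pow]
        nlinarith [hcoord 1 z hz, abs_nonneg (z 1)])
  have intC : Integrable (fun z : E2 => z 0 * z 1 * f (z 0)) σ :=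
    hmul_int0 (fun z => z 0 * z 1) 1 ((hz_meas 0).mul (hz_meas 1))
      (fun z hz => by
        show |z 0 * z 1| ≤ 1
        rw [abs_mul]
        nlinarith [hcoord 0 z hz, hcoord 1 z hz, abs_nonneg (z 0), abs_nonneg (z 1)])
  -- the cross term vanishes
  have hC : ∫ z, z 0 * z 1 * f (z 0) ∂σ = 0 := by
    have he01 : e0 1 = 0 := by simp [he0_def, EuclideanSpace.single_apply]
    have he10 : e1 0 = 0 := by simp [he1_def, EuclideanSpace.single_apply]
    have hip : ⟪e0, (-e1 : E2)⟫ = 0 := by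
      rw [inner_neg_right, he0]
      simp [he1_def, EuclideanSpace.single_apply]
    obtain ⟨R, hR⟩ := exists_isom he0n hne1n hip
    have hR0 : ∀ z : E2, R z 0 = z 0 := by
      intro z
      rw [← he0 (R z), hR e0 z, inner_self_one he0n, inner_neg_left, he1, he01]
      ring
    have hR1 : ∀ z : E2, R z 1 = -(z 1) := by
      intro z
      rw [← he1 (R z), hR e1 z, he0, he10, inner_neg_left, inner_self_one he1n]
      ring
    have h2 := change R (fun z => z 0 * z 1 * f (z 0))
      (((hz_meas 0).mul (hz_meas 1)).mul hmeas0).aestronglyMeasurable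
    have h3 : ∫ z, R z 0 * R z 1 * f (R z 0) ∂σ = ∫ z, -(z 0 * z 1 * f (z 0)) ∂σ := by
      congr 1; funext z; rw [hR0, hR1]; ring
    rw [h3, integral_neg] at h2
    linarith
  -- A + B = 1
  have hAB : A + B = 1 := by
    have h1 : A + B = ∫ z, (z 0 ^ 2 + z 1 ^ 2) * f (z 0) ∂σ := by
      rw [hA_def, hB_def, ← integral_add intA intB]
      congr 1; funext z; ring
    rw [h1, ← hnorm0]
    apply integral_congr_ae
    filter_upwards [hsphere_ae] with z hz
    have h2 : z 0 ^ 2 + z 1 ^ 2 = 1 := by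
      have := norm_sq_eq z
      rw [hz] at this; nlinarith
    rw [h2, one_mul]
  -- the main per-vector formula
  have hI : ∀ w : E2, ‖w‖ = 1 →
      ∫ z, ⟪y, z⟫ ^ 2 * f ⟪w, z⟫ ∂σ =
        ⟪w, y⟫ ^ 2 * A + (‖y‖ ^ 2 - ⟪w, y⟫ ^ 2) * B := by
    intro w hw
    obtain ⟨T, hT1, hT2, hT3, hT4⟩ := hTw w hw
    have hu : ⟪w, y⟫ ^ 2 + ⟪perp w, y⟫ ^ 2 = ‖y‖ ^ 2 := by
      have h1 : ‖T.symm y‖ = ‖y‖ := T.symm.norm_map y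
      have h2 := norm_sq_eq (T.symm y)
      rw [h1, ← hT3 y, ← hT4 y] at h2
      linarith
    have hinner_meas : Measurable fun z : E2 => ⟪y, z⟫ :=
      (Continuous.inner continuous_const continuous_id).measurable
    have hgm : AEStronglyMeasurable (fun z : E2 => ⟪y, z⟫ ^ 2 * f ⟪w, z⟫) σ :=
      ((hinner_meas.pow_const 2).mul (hmeas_w w hw)).aestronglyMeasurable
    have step1 : ∫ z, ⟪y, z⟫ ^ 2 * f ⟪w, z⟫ ∂σ =
        ∫ z, (⟪w, y⟫ * z 0 + ⟪perp w, y⟫ * z 1) ^ 2 * f (z 0) ∂σ := by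
      rw [change T _ hgm]
      congr 1; funext z; rw [hT1 y z, hT2 z]
    have step2 : ∫ z, (⟪w, y⟫ * z 0 + ⟪perp w, y⟫ * z 1) ^ 2 * f (z 0) ∂σ =
        ⟪w, y⟫ ^ 2 * A + (2 * ⟪w, y⟫ * ⟪perp w, y⟫) * (∫ z, z 0 * z 1 * f (z 0) ∂σ) +
          ⟪perp w, y⟫ ^ 2 * B := by
      have e1 : ∫ z, (⟪w, y⟫ * z 0 + ⟪perp w, y⟫ * z 1) ^ 2 * f (z 0) ∂σ =
          ∫ z, (⟪w, y⟫ ^ 2 * (z 0 ^ 2 * f (z 0)) +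
            (2 * ⟪w, y⟫ * ⟪perp w, y⟫) * (z 0 * z 1 * f (z 0)) +
            ⟪perp w, y⟫ ^ 2 * (z 1 ^ 2 * f (z 0))) ∂σ := by
        congr 1; funext z; ring
      have i1 : Integrable (fun z : E2 => ⟪w, y⟫ ^ 2 * (z 0 ^ 2 * f (z 0))) σ :=
        intA.const_mul _
      have i2 : Integrable
          (fun z : E2 => 2 * ⟪w, y⟫ * ⟪perp w, y⟫ * (z 0 * z 1 * f (z 0))) σ :=
        intC.const_mul _
      have i3 : Integrable (fun z : E2 => ⟪perp w, y⟫ ^ 2 * (z 1 ^ 2 * f (z 0))) σ :=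
        intB.const_mul _
      have i12 : Integrable (fun z : E2 => ⟪w, y⟫ ^ 2 * (z 0 ^ 2 * f (z 0)) +
          2 * ⟪w, y⟫ * ⟪perp w, y⟫ * (z 0 * z 1 * f (z 0))) σ := i1.add i2
      rw [hA_def, hB_def, e1, integral_add i12 i3, integral_add i1 i2,
        integral_const_mul, integral_const_mul, integral_const_mul]
    rw [step1, step2, hC]
    have hv : ⟪perp w, y⟫ ^ 2 = ‖y‖ ^ 2 - ⟪w, y⟫ ^ 2 := by linarith
    rw [hv]; ring
  -- rewrite the withDensity integral
  set d : E2 → ℝ := fun z => (n : ℝ)⁻¹ * ∑ i, f ⟪x i, z⟫ with hd_def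
  have hd_meas : Measurable d :=
    measurable_const.mul (Finset.measurable_sum _ (fun i _ => hmeas i))
  have hd_nonneg : ∀ z, 0 ≤ d z := fun z =>
    mul_nonneg (by positivity) (Finset.sum_nonneg fun i _ => hf _)
  have h1 : (∫ z, ⟪y, z⟫ ^ 2
        ∂(σ.withDensity fun z => ENNReal.ofReal (d z))) = ∫ z, d z * ⟪y, z⟫ ^ 2 ∂σ := by
    rw [show (fun z => ENNReal.ofReal (d z)) =
        (fun z => ((Real.toNNReal (d z)) : ENNReal)) from rfl]
    rw [integral_withDensity_eq_integral_smul (f := fun z => Real.toNNReal (d z))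
      (by exact measurable_real_toNNReal.comp hd_meas) _]
    congr 1; funext z
    rw [NNReal.smul_def, smul_eq_mul, Real.coe_toNNReal _ (hd_nonneg z)]
  have h2 : ∫ z, d z * ⟪y, z⟫ ^ 2 ∂σ =
      (n : ℝ)⁻¹ * ∑ i, ∫ z, ⟪y, z⟫ ^ 2 * f ⟪x i, z⟫ ∂σ := by
    have hpt : ∀ z : E2, d z * ⟪y, z⟫ ^ 2 =
        (n : ℝ)⁻¹ * ∑ i, ⟪y, z⟫ ^ 2 * f ⟪x i, z⟫ := by
      intro z
      rw [hd_def, mul_assoc, Finset.sum_mul]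
      congr 1
      exact Finset.sum_congr rfl fun i _ => mul_comm _ _
    simp_rw [hpt]
    rw [integral_const_mul, integral_finset_sum]
    intro i _
    refine hmul_int (x i) (hxnorm i) (fun z => ⟪y, z⟫ ^ 2) (‖y‖ ^ 2)
      ((Continuous.inner continuous_const continuous_id).measurable.pow_const 2) ?_
    intro z hz
    have h := abs_real_inner_le_norm y z
    rw [hz, mul_one] at h
    show |⟪y, z⟫ ^ 2| ≤ ‖y‖ ^ 2
    rw [abs_pow]
    nlinarith [abs_nonneg ⟪y, z⟫, norm_nonneg y]
  have h3 : ∑ i, ∫ z, ⟪y, z⟫ ^ 2 * f ⟪x i, z⟫ ∂σ = ((n : ℝ) / 2) * ‖y‖ ^ 2 := by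
    rw [Finset.sum_congr rfl fun i _ => hI (x i) (hxnorm i)]
    rw [Finset.sum_add_distrib, ← Finset.sum_mul, ← Finset.sum_mul,
      Finset.sum_sub_distrib, Finset.sum_const, Finset.card_univ, Fintype.card_fin,
      nsmul_eq_mul, hFUNTF y]
    linear_combination ((n : ℝ) / 2 * ‖y‖ ^ 2) * hAB
  have hn' : (n : ℝ) ≠ 0 := Nat.cast_ne_zero.2 hn.ne'
  rw [h1, h2, h3]
  field_simp
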